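/- arXiv:1312.0587 — 10 statements merged into one kernel-verified Lean document; each statement's English description precedes it below -/
import Mathlib

section
/- If {f_1,...,f_n} is a λ-contractive family on a metric space X (for every x,y there exists i with d(f_i(x),f_i(y)) ≤ λ·d(x,y)), then for any nonempty bounded set S ⊆ X of diameter D, some f_i satisfies diam(f_i(S)) ≤ 4λD — in the case n = 2: either diam(f_1(S)) ≤ 4λD or diam(f_2(S)) ≤ 4λD. -/
/-- If `{f₁, f₂}` is a `λ`-contractive family on a metric space `X`, then for any
nonempty bounded set `S ⊆ X`, either `diam (f₁ '' S) ≤ 4λ · diam S` or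
`diam (f₂ '' S) ≤ 4λ · diam S`. -/
theorem stmt_0 {X : Type*} [MetricSpace X] (lam : ℝ) (hlam0 : 0 < lam) (hlam1 : lam < 1)
    (f₁ f₂ : X → X)
    (hcontr : ∀ x y : X, dist (f₁ x) (f₁ y) ≤ lam * dist x y ∨
      dist (f₂ x) (f₂ y) ≤ lam * dist x y)
    (S : Set X) (hS : S.Nonempty) (hSb : Bornology.IsBounded S) :
    Metric.diam (f₁ '' S) ≤ 4 * lam * Metric.diam S ∨
      Metric.diam (f₂ '' S) ≤ 4 * lam * Metric.diam S := by
  set D := Metric.diam S with hD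
  have hD0 : 0 ≤ D := Metric.diam_nonneg
  have hlD : 0 ≤ lam * D := by positivity
  have hc : 0 ≤ 4 * lam * D := by positivity
  have dSle : ∀ x ∈ S, ∀ y ∈ S, dist x y ≤ D := fun x hx y hy =>
    Metric.dist_le_diam_of_mem hSb hx hy
  by_contra h
  push_neg at h
  obtain ⟨h₁, h₂⟩ := h
  -- extract far pairs
  have e1 : ∃ a ∈ S, ∃ b ∈ S, 4 * lam * D < dist (f₁ a) (f₁ b) := by
    by_contra hh
    push_neg at hh
    exact absurd (Metric.diam_le_of_forall_dist_le hc (by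
      rintro x ⟨a, ha, rfl⟩ y ⟨b, hb, rfl⟩; exact hh a ha b hb)) (not_le.2 h₁)
  have e2 : ∃ u ∈ S, ∃ v ∈ S, 4 * lam * D < dist (f₂ u) (f₂ v) := by
    by_contra hh
    push_neg at hh
    exact absurd (Metric.diam_le_of_forall_dist_le hc (by
      rintro x ⟨a, ha, rfl⟩ y ⟨b, hb, rfl⟩; exact hh a ha b hb)) (not_le.2 h₂)
  obtain ⟨a, ha, b, hb, hab⟩ := e1
  obtain ⟨u, hu, v, hv, huv⟩ := e2
  -- helper: contraction bound implies ≤ lam * D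
  have bnd : ∀ {g : X → X} {x y : X}, x ∈ S → y ∈ S →
      dist (g x) (g y) ≤ lam * dist x y → dist (g x) (g y) ≤ lam * D := by
    intro g x y hx hy hxy
    exact hxy.trans (mul_le_mul_of_nonneg_left (dSle x hx y hy) hlam0.le)
  -- f₁ contracts (u,v), f₂ contracts (a,b)
  have hP1uv : dist (f₁ u) (f₁ v) ≤ lam * D := by
    rcases hcontr u v with h' | h'
    · exact bnd hu hv h'
    · exact absurd (bnd hu hv h') (by intro hle; linarith)
  have hP2ab : dist (f₂ a) (f₂ b) ≤ lam * D := by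
    rcases hcontr a b with h' | h'
    · exact absurd (bnd ha hb h') (by intro hle; linarith)
    · exact bnd ha hb h'
  have tri : ∀ x y z : X, dist x z ≤ dist x y + dist y z := dist_triangle
  rcases hcontr a u with h1au | h2au
  · have H1au := bnd ha hu h1au
    rcases hcontr b u with h1bu | h2bu
    · have H1bu := bnd hb hu h1bu
      have t := dist_triangle (f₁ a) (f₁ u) (f₁ b)
      rw [dist_comm (f₁ u) (f₁ b)] at t
      linarith
    · have H2bu := bnd hb hu h2bu
      rcases hcontr b v with h1bv | h2bv
      · have H1bv := bnd hb hv h1bv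
        have t := dist_triangle4 (f₁ a) (f₁ u) (f₁ v) (f₁ b)
        rw [dist_comm (f₁ v) (f₁ b)] at t
        linarith
      · have H2bv := bnd hb hv h2bv
        have t := dist_triangle (f₂ u) (f₂ b) (f₂ v)
        rw [dist_comm (f₂ u) (f₂ b)] at t
        linarith
  · have H2au := bnd ha hu h2au
    rcases hcontr a v with h1av | h2av
    · have H1av := bnd ha hv h1av
      rcases hcontr b v with h1bv | h2bv
      · have H1bv := bnd hb hv h1bv
        have t := dist_triangle (f₁ a) (f₁ v) (f₁ b)
        rw [dist_comm (f₁ v) (f₁ b)] at t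
        linarith
      · have H2bv := bnd hb hv h2bv
        have t := dist_triangle4 (f₂ u) (f₂ a) (f₂ b) (f₂ v)
        rw [dist_comm (f₂ u) (f₂ a)] at t
        linarith
    · have H2av := bnd ha hv h2av
      have t := dist_triangle (f₂ u) (f₂ a) (f₂ v)
      rw [dist_comm (f₂ u) (f₂ a)] at t
      linarith
end

section
/- Let (X, 𝒟, diam) be a diameter space. Define d : X × X → ℝ by d(x,y) = inf{diam(U) : U ∈ 𝒟, x ∈ U, y ∈ U} for x ≠ y, and d(x,x) = 0. Then d is well-defined and is a pseudometric on X (symmetric, d(x,x)=0, and satisfies the triangle inequality). -/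
open scoped Classical

/-- From a diameter space `(X, 𝒟, diam)` the induced distance
`d(x,y) = inf {diam U : U ∈ 𝒟, x,y ∈ U}` (and `d(x,x) = 0`) is a well-defined
pseudometric: nonnegative, zero on the diagonal, symmetric, and satisfying the
triangle inequality. -/

theorem stmt_1 {X : Type*} [Nonempty X] (𝒟 : Set (Set X)) (diam : Set X → ℝ)
    (hcover : ∀ x y : X, ∃ U ∈ 𝒟, x ∈ U ∧ y ∈ U)
    (hunion : ∀ U ∈ 𝒟, ∀ V ∈ 𝒟, (U ∩ V).Nonempty → U ∪ V ∈ 𝒟)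
    (hnonneg : ∀ U ∈ 𝒟, 0 ≤ diam U)
    (htri : ∀ U ∈ 𝒟, ∀ V ∈ 𝒟, (U ∩ V).Nonempty → diam (U ∪ V) ≤ diam U + diam V) :
    let d : X → X → ℝ := fun x y =>
      if x = y then 0 else sInf (diam '' {U | U ∈ 𝒟 ∧ x ∈ U ∧ y ∈ U})
    (∀ x y : X, 0 ≤ d x y) ∧ (∀ x : X, d x x = 0) ∧ (∀ x y : X, d x y = d y x) ∧
      (∀ x y z : X, d x z ≤ d x y + d y z) := by
  intro d
  have hne : ∀ x y : X, (diam '' {U | U ∈ 𝒟 ∧ x ∈ U ∧ y ∈ U}).Nonempty := by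
    intro x y
    obtain ⟨U, hU, hx, hy⟩ := hcover x y
    exact ⟨diam U, ⟨U, ⟨hU, hx, hy⟩, rfl⟩⟩
  have hbdd : ∀ x y : X, BddBelow (diam '' {U | U ∈ 𝒟 ∧ x ∈ U ∧ y ∈ U}) := by
    intro x y
    exact ⟨0, by rintro r ⟨U, ⟨hU, -, -⟩, rfl⟩; exact hnonneg U hU⟩
  have hd0 : ∀ x y : X, 0 ≤ d x y := by
    intro x y
    by_cases h : x = y
    · simp [d, h]
    · simp only [d, if_neg h]
      refine le_csInf (hne x y) ?_
      rintro r ⟨U, ⟨hU, -, -⟩, rfl⟩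
      exact hnonneg U hU
  refine ⟨hd0, fun x => by simp [d], ?_, ?_⟩
  · intro x y
    by_cases h : x = y
    · simp [d, h]
    · have h' : ¬ y = x := fun e => h e.symm
      simp only [d, if_neg h, if_neg h']
      have : {U | U ∈ 𝒟 ∧ x ∈ U ∧ y ∈ U} = {U | U ∈ 𝒟 ∧ y ∈ U ∧ x ∈ U} := by
        ext U; exact ⟨fun ⟨a, b, c⟩ => ⟨a, c, b⟩, fun ⟨a, b, c⟩ => ⟨a, c, b⟩⟩
      rw [this]
  · intro x y z
    by_cases hxz : x = z
    · subst hxz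
      have : d x x = 0 := by simp [d]
      rw [this]
      exact add_nonneg (hd0 x y) (hd0 y x)
    by_cases hxy : x = y
    · subst hxy; simp [d]
    by_cases hyz : y = z
    · subst hyz; simp [d]
    have key : ∀ a ∈ diam '' {U | U ∈ 𝒟 ∧ x ∈ U ∧ y ∈ U},
        ∀ b ∈ diam '' {V | V ∈ 𝒟 ∧ y ∈ V ∧ z ∈ V}, d x z ≤ a + b := by
      rintro a ⟨U, ⟨hU, hxU, hyU⟩, rfl⟩ b ⟨V, ⟨hV, hyV, hzV⟩, rfl⟩
      have hInt : (U ∩ V).Nonempty := ⟨y, hyU, hyV⟩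
      have hUV : U ∪ V ∈ 𝒟 := hunion U hU V hV hInt
      have : d x z ≤ diam (U ∪ V) := by
        simp only [d, if_neg hxz]
        exact csInf_le (hbdd x z) ⟨U ∪ V, ⟨hUV, Or.inl hxU, Or.inr hzV⟩, rfl⟩
      exact this.trans (htri U hU V hV hInt)
    simp only [d, if_neg hxy, if_neg hyz, ← sub_le_iff_le_add']
    refine le_csInf (hne y z) (fun b hb => ?_)
    rw [sub_le_iff_le_add']
    have : d x z - b ≤ sInf (diam '' {U | U ∈ 𝒟 ∧ x ∈ U ∧ y ∈ U}) :=
      le_csInf (hne x y) (fun a ha => by linarith [key a ha b hb])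
    simp only [d, if_neg hxz] at this ⊢
    linarith
end

section
/- Under assumptions A1–A3, a sequence (x_n) of points of X that is not eventually constant is Cauchy with respect to the induced metric d if and only if for every positive integer M there exists m > M such that S_m contains all but finitely many points of the sequence. -/
/-- Under A1–A3, a sequence of words that is not eventually constant is Cauchy for
the induced metric iff for every `M` there is `m > M` such that `S m` contains all
but finitely many terms of the sequence. -/
theorem stmt_5 (lam : ℝ) (hlam0 : 0 < lam) (hlam1 : lam < 1)
    (S : ℕ → Set (List Bool)) (hS0 : S 0 = Set.univ)
    (hnest : ∀ i j : ℕ, i < j → (S i ∩ S j).Nonempty → S j ⊆ S i)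
    (hfin : ∀ x : List Bool, {k : ℕ | x ∈ S k}.Finite)
    (hcover : ∀ N : ℕ, ∃ I : Finset ℕ, (∀ i ∈ I, N < i) ∧
      (Set.univ \ ⋃ i ∈ I, S i).Finite)
    (x : ℕ → List Bool)
    (hproper : ¬ ∃ N : ℕ, ∀ n : ℕ, N ≤ n → x n = x N) :
    let d : List Bool → List Bool → ℝ := fun u v =>
      if u = v then 0 else sInf {r : ℝ | ∃ k : ℕ, r = lam ^ k ∧ u ∈ S k ∧ v ∈ S k}
    ((∀ ε : ℝ, 0 < ε → ∃ N : ℕ, ∀ m n : ℕ, N ≤ m → N ≤ n → d (x m) (x n) < ε) ↔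
      ∀ M : ℕ, ∃ m : ℕ, M < m ∧ {n : ℕ | x n ∉ S m}.Finite) := by
  classical
  intro d
  -- if d u v < lam ^ K and u ≠ v, there is k > K with u, v ∈ S k
  have hdlt : ∀ u v : List Bool, u ≠ v → ∀ K : ℕ, d u v < lam ^ K →
      ∃ k : ℕ, K < k ∧ u ∈ S k ∧ v ∈ S k := by
    intro u v hne K h
    have hRne : Set.Nonempty {r : ℝ | ∃ k : ℕ, r = lam ^ k ∧ u ∈ S k ∧ v ∈ S k} :=
      ⟨lam ^ 0, 0, rfl, by simp [hS0]⟩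
    have hRfin : Set.Finite {r : ℝ | ∃ k : ℕ, r = lam ^ k ∧ u ∈ S k ∧ v ∈ S k} := by
      refine Set.Finite.subset ((hfin u).image (fun k => lam ^ k)) ?_
      rintro r ⟨k, rfl, hu, hv⟩
      exact ⟨k, hu, rfl⟩
    obtain ⟨k, hk, hu, hv⟩ := hRne.csInf_mem hRfin
    have hd : d u v = lam ^ k := by
      simp only [d, if_neg hne]; exact hk
    rw [hd] at h
    exact ⟨k, (pow_lt_pow_iff_right_of_lt_one₀ hlam0 hlam1).mp h, hu, hv⟩
  -- if u, v ∈ S k then d u v ≤ lam ^ k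
  have hdle : ∀ u v : List Bool, ∀ k : ℕ, u ∈ S k → v ∈ S k → d u v ≤ lam ^ k := by
    intro u v k hu hv
    by_cases hne : u = v
    · simp only [d, if_pos hne]
      positivity
    · simp only [d, if_neg hne]
      refine csInf_le ⟨0, ?_⟩ ⟨k, rfl, hu, hv⟩
      rintro r ⟨j, rfl, -, -⟩
      positivity
  push_neg at hproper
  constructor
  · -- Cauchy → cofinal containment
    intro h M
    obtain ⟨N, hN⟩ := h (lam ^ M) (pow_pos hlam0 M)
    obtain ⟨q, hqN, hqne⟩ := hproper N
    have hKne : ∃ k : ℕ, M < k ∧ ∃ a b : ℕ, N ≤ a ∧ N ≤ b ∧ x a ≠ x b ∧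
        x a ∈ S k ∧ x b ∈ S k := by
      obtain ⟨k, hk, hu, hv⟩ := hdlt (x q) (x N) hqne M (hN q N hqN le_rfl)
      exact ⟨k, hk, q, N, hqN, le_rfl, hqne, hu, hv⟩
    set m := Nat.find hKne with hm
    obtain ⟨hMm, a, b, haN, hbN, hab, ha, hb⟩ := Nat.find_spec hKne
    refine ⟨m, hMm, Set.Finite.subset (Set.finite_Iio N) ?_⟩
    intro n hn
    simp only [Set.mem_setOf_eq] at hn
    by_contra hnN
    simp only [Set.mem_Iio, not_lt] at hnN
    -- n ≥ N, show x n ∈ S m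
    apply hn
    -- x n differs from x a or x b
    have key : ∀ c : ℕ, N ≤ c → x c ∈ S m → x n ≠ x c → x n ∈ S m := by
      intro c hcN hc hnc
      obtain ⟨k, hMk, hnk, hck⟩ := hdlt (x n) (x c) hnc M (hN n c hnN hcN)
      have hmk : m ≤ k := Nat.find_min' hKne ⟨hMk, n, c, hnN, hcN, hnc, hnk, hck⟩
      rcases eq_or_lt_of_le hmk with heq | hlt
      · rwa [← heq] at hnk
      · exact hnest m k hlt ⟨x c, hc, hck⟩ hnk
    by_cases hna : x n = x a
    · rwa [hna]
    · exact key a haN ha hna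
  · -- cofinal containment → Cauchy
    intro h ε hε
    obtain ⟨K, hK⟩ := exists_pow_lt_of_lt_one hε hlam1
    obtain ⟨m, hKm, hfin'⟩ := h K
    have hlm : lam ^ m < ε := by
      calc lam ^ m ≤ lam ^ K :=
            pow_le_pow_of_le_one hlam0.le hlam1.le hKm.le
        _ < ε := hK
    obtain ⟨B, hB⟩ := hfin'.bddAbove
    refine ⟨B + 1, fun p q hp hq => ?_⟩
    have hxp : x p ∈ S m := by
      by_contra hc
      exact absurd (hB hc) (by omega)
    have hxq : x q ∈ S m := by
      by_contra hc
      exact absurd (hB hc) (by omega)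
    exact lt_of_le_of_lt (hdle (x p) (x q) m hxp hxq) hlm
end

section
/- Under assumptions A1–A3, no proper Cauchy sequence in the completion of (X, d) converges to a point of X; equivalently, every point of X is isolated in the completion. -/
/-- Under A1–A3, no proper Cauchy sequence (one that is not eventually constant)
converges to a point of `X` in the induced metric; i.e. every point of `X` is
isolated in the completion. -/
theorem stmt_6 (lam : ℝ) (hlam0 : 0 < lam) (hlam1 : lam < 1)
    (S : ℕ → Set (List Bool)) (hS0 : S 0 = Set.univ)
    (hnest : ∀ i j : ℕ, i < j → (S i ∩ S j).Nonempty → S j ⊆ S i)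
    (hfin : ∀ x : List Bool, {k : ℕ | x ∈ S k}.Finite)
    (hcover : ∀ N : ℕ, ∃ I : Finset ℕ, (∀ i ∈ I, N < i) ∧
      (Set.univ \ ⋃ i ∈ I, S i).Finite)
    (x : ℕ → List Bool)
    (hproper : ¬ ∃ N : ℕ, ∀ n : ℕ, N ≤ n → x n = x N) :
    let d : List Bool → List Bool → ℝ := fun u v =>
      if u = v then 0 else sInf {r : ℝ | ∃ k : ℕ, r = lam ^ k ∧ u ∈ S k ∧ v ∈ S k}
    (∀ ε : ℝ, 0 < ε → ∃ N : ℕ, ∀ m n : ℕ, N ≤ m → N ≤ n → d (x m) (x n) < ε) →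
      ∀ y : List Bool,
        ¬ Filter.Tendsto (fun n => d (x n) y) Filter.atTop (nhds 0) := by
  intro d _hcauchy y hconv
  -- `y` lies in only finitely many `S k`; let `K` bound those indices.
  obtain ⟨K, hK⟩ := (hfin y).bddAbove
  have hlamK : (0:ℝ) < lam ^ K := pow_pos hlam0 K
  -- Key: if `u ≠ y` then `lam ^ K ≤ d u y`.
  have key : ∀ u : List Bool, u ≠ y → lam ^ K ≤ d u y := by
    intro u hu
    have hne : {r : ℝ | ∃ k : ℕ, r = lam ^ k ∧ u ∈ S k ∧ y ∈ S k}.Nonempty :=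
      ⟨1, 0, by simp [hS0]⟩
    have : lam ^ K ≤ sInf {r : ℝ | ∃ k : ℕ, r = lam ^ k ∧ u ∈ S k ∧ y ∈ S k} := by
      apply le_csInf hne
      rintro r ⟨k, rfl, -, hyk⟩
      have hkK : k ≤ K := hK hyk
      exact pow_le_pow_of_le_one hlam0.le hlam1.le hkK
    simpa [d, if_neg hu] using this
  -- From convergence, eventually `d (x n) y < lam ^ K`, hence `x n = y`.
  have hev : ∀ᶠ n in Filter.atTop, (fun n => d (x n) y) n < lam ^ K :=
    hconv.eventually_lt_const hlamK
  obtain ⟨N, hN⟩ := Filter.eventually_atTop.mp hev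
  apply hproper
  refine ⟨N, fun n hn => ?_⟩
  have heq : ∀ m : ℕ, N ≤ m → x m = y := by
    intro m hm
    by_contra h
    exact absurd (hN m hm) (not_lt.mpr (key _ h))
  rw [heq n hn, heq N le_rfl]
end

section
/- For every word w over the alphabet {a,b}, at least one of aw, bw is available, where a word v is called forbidden if there exists a nonempty word u such that v is a prefix of u^∞ and len(v) > len(u)^2, and available otherwise. -/
lemma join_rep_getElem (u : List Bool) (n i : ℕ) (hi : i < n * u.length) :
    ((List.replicate n u).flatten)[i]? = u[i % u.length]? := by
  induction n generalizing i with
  | zero => simp at hi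
  | succ n ih =>
    rw [show ((List.replicate (n+1) u).flatten) = u ++ (List.replicate n u).flatten from rfl]
    by_cases h : i < u.length
    · rw [List.getElem?_append_left h, Nat.mod_eq_of_lt h]
    · push_neg at h
      rw [List.getElem?_append_right h, ih (i - u.length) (by
        rw [Nat.add_mul, Nat.one_mul] at hi; omega), Nat.mod_eq_sub_mod h]

lemma key_getElem (x : Bool) (w : List Bool) (u : List Bool) (n i : ℕ)
    (hpre : (x :: w) <+: (List.replicate n u).flatten) (hi : i < w.length + 1) :
    (x :: w)[i]? = u[i % u.length]? := by
  obtain ⟨t, ht⟩ := hpre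
  have hlen : w.length + 1 + t.length = n * u.length := by
    have := congrArg List.length ht
    simp [List.length_flatten, List.sum_replicate, smul_eq_mul] at this
    omega
  rw [← join_rep_getElem u n i (by omega), ← ht,
    List.getElem?_append_left (by simpa using hi)]

/-- A nonempty word `v` over `{a,b}` is *forbidden* if there is a nonempty word `u`
such that `v` is a prefix of `u^∞` and `len v > (len u)^2`; it is *available*
otherwise.  For every word `w`, at least one of `aw`, `bw` is available. -/
theorem stmt_8
    (Forbidden : List Bool → Prop)
    (hForbidden : ∀ v : List Bool, Forbidden v ↔
      ∃ u : List Bool, u ≠ [] ∧ (∃ n : ℕ, v <+: (List.replicate n u).flatten) ∧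
        u.length ^ 2 < v.length)
    (w : List Bool) :
    ¬ Forbidden (true :: w) ∨ ¬ Forbidden (false :: w) := by
  by_contra hc
  push_neg at hc
  obtain ⟨h1, h2⟩ := hc
  rw [hForbidden] at h1 h2
  obtain ⟨u, hu, ⟨n, hpre⟩, hlen⟩ := h1
  obtain ⟨u', hu', ⟨m, hpre'⟩, hlen'⟩ := h2
  set p := u.length with hp
  set q := u'.length with hq
  have hp0 : 0 < p := List.length_pos_iff.2 hu
  have hq0 : 0 < q := List.length_pos_iff.2 hu'
  simp only [List.length_cons] at hlen hlen'
  -- the lcm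
  set L := Nat.lcm p q with hL
  have hL0 : 0 < L := Nat.pos_of_ne_zero (Nat.lcm_ne_zero (by omega) (by omega))
  have hLpq : L ≤ p * q := Nat.le_of_dvd (by positivity)
    (Nat.lcm_dvd (Dvd.intro q rfl) (Dvd.intro_left p rfl))
  have hpq : p * q ≤ w.length := by
    rcases le_total p q with h | h
    · calc p * q ≤ q * q := Nat.mul_le_mul_right q h
        _ = q ^ 2 := (sq q).symm
        _ ≤ w.length := by omega
    · calc p * q ≤ p * p := Nat.mul_le_mul_left p h
        _ = p ^ 2 := (sq p).symm
        _ ≤ w.length := by omega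
  have hLw : L < w.length + 1 := by omega
  have e1 : (true :: w)[L]? = u[L % p]? := key_getElem _ _ _ _ _ hpre hLw
  have e2 : (false :: w)[L]? = u'[L % q]? := key_getElem _ _ _ _ _ hpre' hLw
  have hLp : L % p = 0 := Nat.mod_eq_zero_of_dvd (Nat.dvd_lcm_left p q)
  have hLq : L % q = 0 := Nat.mod_eq_zero_of_dvd (Nat.dvd_lcm_right p q)
  have e0 : (true :: w)[0]? = u[0 % p]? := key_getElem _ _ _ _ _ hpre (by omega)
  have e0' : (false :: w)[0]? = u'[0 % q]? := key_getElem _ _ _ _ _ hpre' (by omega)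
  simp only [Nat.zero_mod, List.getElem?_cons_zero] at e0 e0'
  rw [hLp, ← e0] at e1
  rw [hLq, ← e0'] at e2
  obtain ⟨k, hk⟩ : ∃ k, L = k + 1 := ⟨L - 1, by omega⟩
  rw [hk, List.getElem?_cons_succ] at e1 e2
  rw [e1] at e2
  simp at e2
end

section
/- For every word w over {a,b}, at least one of wa, wb is available. -/
/-- Stepping along a period `d` of `h` on `[0, n)`. -/
private lemma per_step (h : ℕ → Bool) (n d : ℕ)
    (hp : ∀ i, i + d < n → h i = h (i + d)) :
    ∀ k i, i + k * d < n → h i = h (i + k * d) := by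
  intro k
  induction k with
  | zero => simp
  | succ k ih =>
    intro i hi
    rw [Nat.succ_mul] at hi ⊢
    have h1 : i + k * d < n := by omega
    calc h i = h (i + k * d) := ih i h1
    _ = h (i + k * d + d) := hp _ (by omega)
    _ = h (i + (k * d + d)) := by ring_nf

/-- If `h` has periods `p` and `q` on `[0,n)` with `q < p` and `p + q ≤ n`,
then it has period `p - q`. -/
private lemma per_sub (h : ℕ → Bool) (n p q : ℕ) (hq : 0 < q) (hqp : q < p) (hn : p + q ≤ n)
    (Hp : ∀ i, i + p < n → h i = h (i + p)) (Hq : ∀ i, i + q < n → h i = h (i + q)) :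
    ∀ i, i + (p - q) < n → h i = h (i + (p - q)) := by
  intro i hi
  by_cases hc : i + p < n
  · have h1 : h (i + (p - q)) = h (i + (p - q) + q) := Hq _ (by omega)
    have h2 : i + (p - q) + q = i + p := by omega
    rw [h1, h2]; exact Hp i hc
  · have hiq : q ≤ i := by omega
    have e1 : h (i - q) = h (i - q + q) := Hq (i - q) (by omega)
    rw [Nat.sub_add_cancel hiq] at e1
    have e2 : h (i - q) = h (i - q + p) := Hp _ (by omega)
    have e3 : i - q + p = i + (p - q) := by omega
    rw [← e1, e2, e3]

/-- Fine–Wilf: periods `p` and `q` with `p + q ≤ n` give period `gcd p q`. -/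
private lemma per_gcd (h : ℕ → Bool) (n : ℕ) :
    ∀ s p q, p + q ≤ s → 0 < p → 0 < q → p + q ≤ n →
    (∀ i, i + p < n → h i = h (i + p)) → (∀ i, i + q < n → h i = h (i + q)) →
    ∀ i, i + Nat.gcd p q < n → h i = h (i + Nat.gcd p q) := by
  intro s
  induction s with
  | zero => intro p q hs hp hq; omega
  | succ s ih =>
    intro p q hs hp hq hn Hp Hq
    rcases lt_trichotomy p q with hlt | heq | hgt
    · have Hd := per_sub h n q p hp hlt (by omega) Hq Hp
      have hg : Nat.gcd p q = Nat.gcd (q - p) p := by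
        rw [Nat.gcd_sub_self_left (le_of_lt hlt), Nat.gcd_comm]
      rw [hg, Nat.gcd_comm]
      exact ih p (q - p) (by omega) hp (by omega) (by omega) Hp Hd
    · subst heq
      rw [Nat.gcd_self]
      exact Hp
    · have Hd := per_sub h n p q hq hgt hn Hp Hq
      have hg : Nat.gcd p q = Nat.gcd (p - q) q := by
        rw [Nat.gcd_sub_self_left (le_of_lt hgt)]
      rw [hg]
      exact ih (p - q) q (by omega) (by omega) hq (by omega) Hd Hq

/-- Two positions below `n` whose difference is a multiple of a period are equal. -/
private lemma per_eq (h : ℕ → Bool) (n g a b : ℕ) (hab : a ≤ b) (hb : b < n)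
    (hd : g ∣ (b - a)) (Hg : ∀ i, i + g < n → h i = h (i + g)) : h a = h b := by
  obtain ⟨k, hk⟩ := hd
  rw [Nat.mul_comm] at hk
  have hb' : b = a + k * g := by omega
  have := per_step h n g Hg k a (by omega)
  rwa [← hb'] at this

/-- A prefix of `u^m` has period `u.length`. -/
private lemma per_of_prefix (v u : List Bool) (m : ℕ)
    (hv : v <+: (List.replicate m u).flatten) :
    ∀ i, i + u.length < v.length → v.getD i false = v.getD (i + u.length) false := by
  intro i hi
  obtain ⟨r, hr⟩ := hv
  have hiv : i < v.length := by omega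
  rcases m with _ | m'
  · exfalso
    have : v.length + r.length = 0 := by
      have := congrArg List.length hr
      simpa using this
    omega
  have hJc : (List.replicate (m' + 1) u).flatten = u ++ (List.replicate m' u).flatten := by
    rw [List.replicate_succ]
    simp
  have hJp : (List.replicate (m' + 1) u).flatten = (List.replicate m' u).flatten ++ u := by
    rw [List.replicate_succ']
    simp
  have hvJ : v.length ≤ ((List.replicate (m' + 1) u).flatten).length := by
    rw [← hr]; simp
  have hJlen : ((List.replicate (m' + 1) u).flatten).length
      = ((List.replicate m' u).flatten).length + u.length := by
    rw [hJp]; simp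
  have hi' : i < ((List.replicate m' u).flatten).length := by omega
  have g1 : ∀ j, j < v.length →
      v.getD j false = ((List.replicate (m' + 1) u).flatten).getD j false := by
    intro j hj
    rw [← hr, List.getD_append _ _ _ _ hj]
  rw [g1 i hiv, g1 (i + u.length) hi]
  have g2 : ((List.replicate (m' + 1) u).flatten).getD (i + u.length) false
      = ((List.replicate m' u).flatten).getD i false := by
    rw [hJc, List.getD_append_right _ _ _ _ (by omega)]
    simp
  have g3 : ((List.replicate (m' + 1) u).flatten).getD i false
      = ((List.replicate m' u).flatten).getD i false := by
    rw [hJp, List.getD_append _ _ _ _ hi']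
  rw [g2, g3]

/-- For every word `w` over `{a,b}`, at least one of `wa`, `wb` is available
(where a nonempty word `v` is forbidden if it is a prefix of `u^∞` for some
nonempty `u` with `len v > (len u)^2`, and available otherwise). -/
theorem stmt_9
    (Forbidden : List Bool → Prop)
    (hForbidden : ∀ v : List Bool, Forbidden v ↔
      ∃ u : List Bool, u ≠ [] ∧ (∃ n : ℕ, v <+: (List.replicate n u).flatten) ∧
        u.length ^ 2 < v.length)
    (w : List Bool) :
    ¬ Forbidden (w ++ [true]) ∨ ¬ Forbidden (w ++ [false]) := by
  by_contra hcon
  push_neg at hcon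
  obtain ⟨h1, h2⟩ := hcon
  rw [hForbidden] at h1 h2
  obtain ⟨u1, hu1ne, ⟨m1, hpre1⟩, hlen1⟩ := h1
  obtain ⟨u2, hu2ne, ⟨m2, hpre2⟩, hlen2⟩ := h2
  set n := w.length with hn
  set p := u1.length with hp
  set q := u2.length with hq
  have hp1 : 0 < p := List.length_pos_iff.mpr hu1ne
  have hq1 : 0 < q := List.length_pos_iff.mpr hu2ne
  have hsl : (w ++ [true]).length = n + 1 := by simp [hn]
  have htl : (w ++ [false]).length = n + 1 := by simp [hn]
  have hpn : p ^ 2 ≤ n := by rw [hsl] at hlen1; omega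
  have hqn : q ^ 2 ≤ n := by rw [htl] at hlen2; omega
  have hple : p ≤ n := le_trans (by nlinarith) hpn
  have hqle : q ≤ n := le_trans (by nlinarith) hqn
  set h : ℕ → Bool := fun i => w.getD i false with hh
  -- values of the extended words
  have hs_lt : ∀ j, j < n → (w ++ [true]).getD j false = h j := by
    intro j hj; rw [List.getD_append _ _ _ _ hj]
  have ht_lt : ∀ j, j < n → (w ++ [false]).getD j false = h j := by
    intro j hj; rw [List.getD_append _ _ _ _ hj]
  have hs_n : (w ++ [true]).getD n false = true := by
    rw [List.getD_append_right _ _ _ _ le_rfl]; simp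
  have ht_n : (w ++ [false]).getD n false = false := by
    rw [List.getD_append_right _ _ _ _ le_rfl]; simp
  have Ps := per_of_prefix (w ++ [true]) u1 m1 hpre1
  have Pt := per_of_prefix (w ++ [false]) u2 m2 hpre2
  rw [hsl] at Ps
  rw [htl] at Pt
  have Hp : ∀ i, i + p < n → h i = h (i + p) := by
    intro i hi
    have := Ps i (by omega)
    rwa [hs_lt i (by omega), hs_lt (i + p) hi] at this
  have Hq : ∀ i, i + q < n → h i = h (i + q) := by
    intro i hi
    have := Pt i (by omega)
    rwa [ht_lt i (by omega), ht_lt (i + q) hi] at this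
  have htrue : h (n - p) = true := by
    have := Ps (n - p) (by omega)
    rw [show n - p + p = n by omega] at this
    rw [hs_lt (n - p) (by omega)] at this
    exact this.trans hs_n
  have hfalse : h (n - q) = false := by
    have := Pt (n - q) (by omega)
    rw [show n - q + q = n by omega] at this
    rw [ht_lt (n - q) (by omega)] at this
    exact this.trans ht_n
  by_cases hpq : p = q
  · rw [hpq] at htrue
    rw [htrue] at hfalse
    exact absurd hfalse (by simp)
  · have hpn' : p * p ≤ n := by rw [← pow_two]; exact hpn
    have hqn' : q * q ≤ n := by rw [← pow_two]; exact hqn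
    have hpqn : p + q ≤ n := by
      rcases Nat.lt_or_ge p q with hlt | hge
      · have h2 : q * 2 ≤ q * q := Nat.mul_le_mul_left q (by omega)
        omega
      · have hlt : q < p := lt_of_le_of_ne hge (Ne.symm hpq)
        have h2 : p * 2 ≤ p * p := Nat.mul_le_mul_left p (by omega)
        omega
    set g := Nat.gcd p q with hg
    have Hg := per_gcd h n (p + q) p q le_rfl hp1 hq1 hpqn Hp Hq
    have hkey : h (n - p) = h (n - q) := by
      rcases Nat.lt_or_ge p q with hlt | hge
      · have hd : g ∣ (n - p) - (n - q) := by
          rw [show (n - p) - (n - q) = q - p by omega]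
          exact Nat.dvd_sub (Nat.gcd_dvd_right p q) (Nat.gcd_dvd_left p q)
        exact (per_eq h n g (n - q) (n - p) (by omega) (by omega) hd Hg).symm
      · have hd : g ∣ (n - q) - (n - p) := by
          rw [show (n - q) - (n - p) = p - q by omega]
          exact Nat.dvd_sub (Nat.gcd_dvd_left p q) (Nat.gcd_dvd_right p q)
        exact per_eq h n g (n - p) (n - q) (by omega) (by omega) hd Hg
    rw [htrue, hfalse] at hkey
    exact absurd hkey (by simp)
end

section
/- Let w be a nonempty word over {a,b}, let u be a prefix of w^∞ with len(u) ≥ len(w)^2, and let s be a character such that v = us is not a prefix of w^∞. Then v is available. -/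
lemma rep_join_len (l : List Bool) (n : ℕ) :
    ((List.replicate n l).flatten).length = n * l.length := by
  induction n with
  | zero => simp
  | succ n ih => simp [List.replicate_succ, ih, Nat.succ_mul]; ring

lemma rep_join_prefix (l : List Bool) {a b : ℕ} (h : a ≤ b) :
    (List.replicate a l).flatten <+: (List.replicate b l).flatten := by
  obtain ⟨c, rfl⟩ := Nat.le.dest h
  rw [List.replicate_add, List.flatten_append]
  exact List.prefix_append _ _

lemma rep_join_mul (l : List Bool) (a b : ℕ) :
    (List.replicate (a * b) l).flatten
      = (List.replicate a ((List.replicate b l).flatten)).flatten := by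
  induction a with
  | zero => simp
  | succ a ih =>
      have h : (a + 1) * b = b + a * b := by ring
      rw [h, List.replicate_add, List.flatten_append, ih,
        List.replicate_succ, List.flatten_cons]



/-- If `w` is a nonempty word, `u` is a prefix of `w^∞` with `len u ≥ (len w)^2`,
and `s` is a character such that `v = u ++ [s]` is not a prefix of `w^∞`, then
`v` is available. -/
theorem stmt_10
    (Forbidden : List Bool → Prop)
    (hForbidden : ∀ v : List Bool, Forbidden v ↔
      ∃ t : List Bool, t ≠ [] ∧ (∃ n : ℕ, v <+: (List.replicate n t).flatten) ∧
        t.length ^ 2 < v.length)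
    (w u : List Bool) (s : Bool) (hw : w ≠ [])
    (hu : ∃ n : ℕ, u <+: (List.replicate n w).flatten)
    (hlen : w.length ^ 2 ≤ u.length)
    (hs : ∀ n : ℕ, ¬ (u ++ [s]) <+: (List.replicate n w).flatten) :
    ¬ Forbidden (u ++ [s]) := by
  intro hF
  rw [hForbidden] at hF
  obtain ⟨t, ht, ⟨m, hm⟩, hlt⟩ := hF
  set p := w.length with hp
  set q := t.length with hq
  have hp0 : 0 < p := List.length_pos_iff.mpr hw
  have hq0 : 0 < q := List.length_pos_iff.mpr ht
  have hqsq : q ^ 2 ≤ u.length := by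
    have := hlt
    simp at this
    omega
  have hpq : p * q ≤ u.length := by
    rcases le_total p q with h | h
    · calc p * q ≤ q * q := Nat.mul_le_mul_right _ h
        _ = q ^ 2 := (sq q).symm
        _ ≤ u.length := hqsq
    · calc p * q ≤ p * p := Nat.mul_le_mul_left _ h
        _ = p ^ 2 := (sq p).symm
        _ ≤ u.length := hlen
  obtain ⟨n, hn⟩ := hu
  -- u.length ≤ n * p
  have hun : u.length ≤ n * p := by
    have := hn.length_le; rwa [rep_join_len] at this
  have husm : u.length + 1 ≤ m * q := by
    have h2 := hm.length_le
    rw [rep_join_len, ← hq] at h2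
    simpa using h2
  have hqn : q ≤ n := by
    refine Nat.le_of_mul_le_mul_right ?_ hp0
    calc q * p = p * q := Nat.mul_comm q p
      _ ≤ u.length := hpq
      _ ≤ n * p := hun
  have hpm : p ≤ m := by
    refine Nat.le_of_mul_le_mul_right ?_ hq0
    omega
  -- X1 = (replicate q w).flatten is a prefix of u
  have hX1 : (List.replicate q w).flatten <+: u := by
    refine List.prefix_of_prefix_length_le (rep_join_prefix w hqn) hn ?_
    rw [rep_join_len]; rw [Nat.mul_comm]; exact hpq
  -- X2 = (replicate p t).flatten is a prefix of u
  have hX2' : (List.replicate p t).flatten <+: (u ++ [s]) := by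
    refine List.prefix_of_prefix_length_le (rep_join_prefix t hpm) hm ?_
    rw [rep_join_len, ← hq]; simp; omega
  have hX2 : (List.replicate p t).flatten <+: u := by
    refine List.prefix_of_prefix_length_le hX2' (List.prefix_append u [s]) ?_
    rw [rep_join_len]; exact hpq
  have hXeq : (List.replicate q w).flatten = (List.replicate p t).flatten := by
    apply List.IsPrefix.eq_of_length
    · exact List.prefix_of_prefix_length_le hX1 hX2
        (by rw [rep_join_len, rep_join_len]; rw [Nat.mul_comm])
    · rw [rep_join_len, rep_join_len]; rw [Nat.mul_comm]
  -- now u ++ [s] is a prefix of (replicate (m * q) w).flatten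
  apply hs (m * q)
  calc u ++ [s] <+: (List.replicate m t).flatten := hm
    _ <+: (List.replicate (m * p) t).flatten := rep_join_prefix t (Nat.le_mul_of_pos_right m hp0)
    _ = (List.replicate m ((List.replicate p t).flatten)).flatten := rep_join_mul t m p
    _ = (List.replicate m ((List.replicate q w).flatten)).flatten := by rw [hXeq]
    _ = (List.replicate (m * q) w).flatten := (rep_join_mul w m q).symm
end

section
/- There is no word w over {a,b} such that both wa and wb are forbidden, i.e., such that there exist nonempty words t_1, t_2 with wa a prefix of t_1^∞, wb a prefix of t_2^∞, len(wa) > len(t_1)^2, and len(wb) > len(t_2)^2. -/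
lemma joinrep_getD (t : List Bool) (n i : ℕ)
    (hi : i < ((List.replicate n t).flatten).length) :
    ((List.replicate n t).flatten).getD i false = t.getD (i % t.length) false := by
  induction n generalizing i with
  | zero => simp at hi
  | succ n ih =>
    rw [List.replicate_succ, List.flatten_cons]
    by_cases h : i < t.length
    · rw [List.getD_append _ _ _ _ h, Nat.mod_eq_of_lt h]
    · push_neg at h
      have ht : 0 < t.length := by
        rcases Nat.eq_zero_or_pos t.length with h0 | h0
        · exfalso
          have : t = [] := List.length_eq_zero_iff.mp h0
          subst this; simp at hi
        · exact h0
      rw [List.getD_append_right _ _ _ _ h]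
      have hi' : i - t.length < ((List.replicate n t).flatten).length := by
        rw [List.replicate_succ, List.flatten_cons, List.length_append] at hi
        omega
      rw [ih _ hi', Nat.mod_eq_sub_mod h]

/-- There is no word `w` over `{a,b}` such that both `wa` and `wb` are forbidden:
there are no nonempty words `t₁, t₂` with `wa` a prefix of `t₁^∞`, `wb` a prefix
of `t₂^∞`, `len wa > (len t₁)^2` and `len wb > (len t₂)^2`. -/
theorem stmt_15 :
    ¬ ∃ (w t₁ t₂ : List Bool), t₁ ≠ [] ∧ t₂ ≠ [] ∧
      (∃ n : ℕ, (w ++ [true]) <+: (List.replicate n t₁).flatten) ∧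
      (∃ n : ℕ, (w ++ [false]) <+: (List.replicate n t₂).flatten) ∧
      t₁.length ^ 2 < (w ++ [true]).length ∧
      t₂.length ^ 2 < (w ++ [false]).length := by
  rintro ⟨w, t₁, t₂, h1, h2, ⟨n1, u1, hu1⟩, ⟨n2, u2, hu2⟩, hl1, hl2⟩
  set p := t₁.length with hp_def
  set q := t₂.length with hq_def
  have hp : 0 < p := List.length_pos_iff.mpr h1
  have hq : 0 < q := List.length_pos_iff.mpr h2
  set r := w.length with hr_def
  have hrp : p ^ 2 ≤ r := by simp [List.length_append] at hl1; omega
  have hrq : q ^ 2 ≤ r := by simp [List.length_append] at hl2; omega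
  have key1 : ∀ i, i ≤ r → (w ++ [true]).getD i false = t₁.getD (i % p) false := by
    intro i hi
    have hiw : i < (w ++ [true]).length := by simp; omega
    have hlen : i < ((List.replicate n1 t₁).flatten).length := by
      rw [← hu1, List.length_append]; omega
    calc (w ++ [true]).getD i false
        = ((w ++ [true]) ++ u1).getD i false := (List.getD_append _ _ _ _ hiw).symm
      _ = t₁.getD (i % p) false := by rw [hu1]; exact joinrep_getD t₁ n1 i hlen
  have key2 : ∀ i, i ≤ r → (w ++ [false]).getD i false = t₂.getD (i % q) false := by
    intro i hi
    have hiw : i < (w ++ [false]).length := by simp; omega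
    have hlen : i < ((List.replicate n2 t₂).flatten).length := by
      rw [← hu2, List.length_append]; omega
    calc (w ++ [false]).getD i false
        = ((w ++ [false]) ++ u2).getD i false := (List.getD_append _ _ _ _ hiw).symm
      _ = t₂.getD (i % q) false := by rw [hu2]; exact joinrep_getD t₂ n2 i hlen
  set L := Nat.lcm p q with hL_def
  have hLpos : 0 < L := by
    rcases Nat.eq_zero_or_pos L with h | h
    · exfalso
      have h' := Nat.gcd_mul_lcm p q
      rw [← hL_def, h, Nat.mul_zero] at h'
      nlinarith
    · exact h
  have hLpq : L ≤ p * q := Nat.le_of_dvd (by positivity)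
    (Nat.lcm_dvd (Dvd.intro q rfl) (Dvd.intro_left p rfl))
  have hpq : p * q ≤ r := by
    rcases le_total p q with h | h
    · nlinarith
    · nlinarith
  have hLr : L ≤ r := le_trans hLpq hpq
  set j := r - L with hj_def
  have hjr : j < r := by omega
  have hjL : j + L = r := by omega
  -- mod facts
  obtain ⟨k1, hk1⟩ : p ∣ L := Nat.dvd_lcm_left p q
  obtain ⟨k2, hk2⟩ : q ∣ L := Nat.dvd_lcm_right p q
  have hm1 : r % p = j % p := by
    rw [← hjL, hk1, Nat.add_mul_mod_self_left]
  have hm2 : r % q = j % q := by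
    rw [← hjL, hk2, Nat.add_mul_mod_self_left]
  -- evaluate at r
  have e1 : (w ++ [true]).getD r false = true := by
    rw [List.getD_append_right _ _ _ _ (le_refl r)]; simp [hr_def]
  have e2 : (w ++ [false]).getD r false = false := by
    rw [List.getD_append_right _ _ _ _ (le_refl r)]; simp
  -- evaluate at j
  have e3 : (w ++ [true]).getD j false = (w ++ [false]).getD j false := by
    rw [List.getD_append _ _ _ _ hjr, List.getD_append _ _ _ _ hjr]
  have c1 := key1 r (le_refl r)
  have c2 := key2 r (le_refl r)
  have c3 := key1 j (le_of_lt hjr)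
  have c4 := key2 j (le_of_lt hjr)
  rw [e1] at c1; rw [e2] at c2
  rw [hm1] at c1; rw [hm2] at c2
  rw [c3, c4] at e3
  rw [← c1, ← c2] at e3
  exact absurd e3 (by simp)
end

section
/- Let w be a minimal word over {a,b} and let s be its last character, and let u be the cyclic permutation of w satisfying sw = us. Then u is also minimal. -/
/-- Rotation identity for the infinite periodic word. -/
lemma rot_aux (x : Bool) (t : List Bool) (i : ℕ) :
    (t ++ [x]).getD (i % (t.length + 1)) false
      = (x :: t).getD ((i + 1) % (t.length + 1)) false := by
  set n := t.length + 1 with hn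
  have hk : i % n < n := Nat.mod_lt _ (Nat.succ_pos _)
  have hmod : (i + 1) % n = (i % n + 1) % n := (Nat.mod_add_mod i n 1).symm
  rcases Nat.lt_succ_iff_lt_or_eq.mp hk with h | h
  · have h1 : (i + 1) % n = i % n + 1 := by
      rw [hmod]; exact Nat.mod_eq_of_lt (by omega)
    rw [h1, List.getD_cons_succ, List.getD_append _ _ _ _ h]
  · have h1 : (i + 1) % n = 0 := by rw [hmod, h, hn, Nat.mod_self]
    rw [h1, h, List.getD_cons_zero]
    rw [List.getD_append_right _ _ _ _ (le_refl _)]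
    simp

/-- If `w = w' ++ [s]` is a minimal word with last character `s`, then its cyclic
permutation `u = s :: w'` (which satisfies `s·w = u·s`) is also minimal. -/
theorem stmt_16 (w' : List Bool) (s : Bool) :
    let inf : List Bool → ℕ → Bool := fun u i => u.getD (i % u.length) false
    let Minimal : List Bool → Prop := fun v =>
      v ≠ [] ∧ ∀ u : List Bool, u ≠ [] → inf u = inf v → v.length ≤ u.length
    Minimal (w' ++ [s]) → Minimal (s :: w') := by
  intro inf Minimal h
  obtain ⟨_, hmin⟩ := h
  refine ⟨List.cons_ne_nil _ _, ?_⟩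
  intro v hv hinf
  obtain ⟨x, t, rfl⟩ := List.exists_cons_of_ne_nil hv
  have h2 : inf (t ++ [x]) = inf (w' ++ [s]) := by
    funext i
    have e1 : inf (t ++ [x]) i = inf (x :: t) (i + 1) := by
      simp only [inf, List.length_append, List.length_cons, List.length_singleton]
      exact rot_aux x t i
    have e2 : inf (w' ++ [s]) i = inf (s :: w') (i + 1) := by
      simp only [inf, List.length_append, List.length_cons, List.length_singleton]
      exact rot_aux s w' i
    rw [e1, e2, hinf]
  have := hmin (t ++ [x]) (by simp) h2
  simpa using this
end

section
/- For every word w over {a,b} and every available word v with len(v) > len(w), if there exists a word u with both u ∈ W_v and wu ∈ W_v (where W_v = {vx : x a word}), then v is a prefix of w^∞; consequently len(v) ≤ len(w)^2 and there are only finitely many available words v such that W_v contains both some u and wu. -/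
lemma prefix_wv {v w u : List Bool} (hlen : w.length < v.length)
    (h1 : v <+: u) (h2 : v <+: (w ++ u)) : v <+: w ++ v := by
  have hvu : v = (w ++ u).take v.length := by
    obtain ⟨s, hs⟩ := h2
    rw [← hs, List.take_left]
  have hwle : w.length ≤ v.length := hlen.le
  have htake : (w ++ u).take v.length = w ++ u.take (v.length - w.length) := by
    rw [List.take_append, List.take_of_length_le hwle]
  have huv : u.take (v.length - w.length) = v.take (v.length - w.length) := by
    obtain ⟨r, hr⟩ := h1
    rw [← hr, List.take_append,
      Nat.sub_eq_zero_of_le (Nat.sub_le _ _), List.take_zero, List.append_nil]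
  have hv : v = w ++ v.take (v.length - w.length) :=
    calc v = (w ++ u).take v.length := hvu
      _ = w ++ u.take (v.length - w.length) := htake
      _ = w ++ v.take (v.length - w.length) := by rw [huv]
  nth_rewrite 1 [hv]
  exact (List.prefix_append_right_inj w).mpr (List.take_prefix _ _)

lemma prefix_pow {v w : List Bool} (h : v <+: w ++ v) (n : ℕ) :
    v <+: (List.replicate n w).flatten ++ v := by
  induction n with
  | zero => simp
  | succ n ih =>
    have : v <+: w ++ ((List.replicate n w).flatten ++ v) :=
      h.trans ((List.prefix_append_right_inj w).mpr ih)
    simpa [List.replicate_succ, List.append_assoc] using this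

/-- Fix a nonempty word `w`.  For every available word `v` with `len v > len w`,
if the set `W_v` of words with prefix `v` contains both some `u` and `wu`, then
`v` is a prefix of `w^∞`; consequently `len v ≤ (len w)^2`, and there are only
finitely many available words `v` such that `W_v` contains both some `u` and `wu`. -/
theorem stmt_18
    (Available : List Bool → Prop)
    (hAvailable : ∀ v : List Bool, Available v ↔
      ¬ ∃ t : List Bool, t ≠ [] ∧ (∃ n : ℕ, v <+: (List.replicate n t).flatten) ∧
        t.length ^ 2 < v.length)
    (w : List Bool) (hw : w ≠ []) :
    (∀ v : List Bool, Available v → w.length < v.length →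
      (∃ u : List Bool, v <+: u ∧ v <+: (w ++ u)) →
        (∃ n : ℕ, v <+: (List.replicate n w).flatten) ∧ v.length ≤ w.length ^ 2) ∧
      {v : List Bool | Available v ∧ ∃ u : List Bool, v <+: u ∧ v <+: (w ++ u)}.Finite := by
  have hwpos : 0 < w.length := List.length_pos_iff.mpr hw
  have main : ∀ v : List Bool, Available v → w.length < v.length →
      (∃ u : List Bool, v <+: u ∧ v <+: (w ++ u)) →
        (∃ n : ℕ, v <+: (List.replicate n w).flatten) ∧ v.length ≤ w.length ^ 2 := by
    intro v hav hlen ⟨u, h1, h2⟩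
    have hwv := prefix_wv hlen h1 h2
    have hpref : v <+: (List.replicate v.length w).flatten := by
      have h := prefix_pow hwv v.length
      have hJ : v.length ≤ ((List.replicate v.length w).flatten).length := by
        simp only [List.length_flatten, List.map_replicate, List.sum_replicate, smul_eq_mul]
        calc v.length = v.length * 1 := (mul_one _).symm
          _ ≤ v.length * w.length := Nat.mul_le_mul_left _ hwpos
      obtain ⟨s, hs⟩ := h
      have : v = ((List.replicate v.length w).flatten).take v.length := by
        conv_lhs => rw [← List.take_left (l₁ := v) (l₂ := s)]
        rw [hs, List.take_append,
          Nat.sub_eq_zero_of_le hJ, List.take_zero, List.append_nil]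
      nth_rewrite 1 [this]
      exact List.take_prefix _ _
    refine ⟨⟨v.length, hpref⟩, ?_⟩
    by_contra hlt
    exact (hAvailable v).mp hav ⟨w, hw, ⟨v.length, hpref⟩, Nat.lt_of_not_le hlt⟩
  refine ⟨main, ?_⟩
  apply (List.finite_length_le Bool (w.length ^ 2)).subset
  rintro v ⟨hav, hu⟩
  simp only [Set.mem_setOf_eq]
  rcases le_or_gt v.length w.length with h | h
  · calc v.length ≤ w.length := h
      _ ≤ w.length ^ 2 := by nlinarith
  · exact (main v hav h hu).2
end
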